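/- Let λ ⋖ μ be Young diagrams with μ obtained from λ by adding a box of content c = c(μ/λ). Then the Cauchy transforms satisfy (z - c)²/((z - c - 1)(z - c + 1)) · G_λ(z) = G_μ(z) as rational functions in z. -/

import Mathlib

open Finset

namespace YG

/-- `Covers μ l` : the Young diagram `l` is obtained from `μ` by adding one box. -/
def Covers (μ l : YoungDiagram) : Prop := μ ≤ l ∧ l.card = μ.card + 1

/-- The content `j - i` of a cell `(i, j)`. -/
def content (c : ℕ × ℕ) : ℤ := (c.2 : ℤ) - (c.1 : ℤ)

/-- The content of the unique box of `l \ μ` when `Covers μ l`. -/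
def addedContent (μ l : YoungDiagram) : ℤ := ∑ c ∈ l.cells \ μ.cells, content c

/-- The removable corner cells of a Young diagram; their contents are the local
maxima `y_i` of the profile. -/
def removableCells (l : YoungDiagram) : Finset (ℕ × ℕ) :=
  l.cells.filter (fun c => (c.1, c.2 + 1) ∉ l ∧ (c.1 + 1, c.2) ∉ l)

/-- The addable cells of a Young diagram; their contents are the local minima `x_i`
of the profile. -/
def addableCells (l : YoungDiagram) : Finset (ℕ × ℕ) :=
  ((Finset.range (l.card + 1)) ×ˢ (Finset.range (l.card + 1))).filter
    (fun c => c ∉ l ∧ (c.1 = 0 ∨ (c.1 - 1, c.2) ∈ l) ∧ (c.2 = 0 ∨ (c.1, c.2 - 1) ∈ l))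

/-- The transition probability `p↑(l, ·)` at an addable content `x = x_i`:
`∏_j (x_i - y_j) / ∏_{j ≠ i} (x_i - x_j)`. -/
noncomputable def pUpAt (l : YoungDiagram) (x : ℤ) : ℝ :=
  (∏ r ∈ removableCells l, ((x : ℝ) - (content r : ℝ))) /
    (∏ a ∈ (addableCells l).filter (fun a => content a ≠ x), ((x : ℝ) - (content a : ℝ)))

/-- The cotransition probability `p↓(l, ·)` at a removable content `y = y_i`:
`-(1/|l|) ∏_j (y_i - x_j) / ∏_{j ≠ i} (y_i - y_j)`. -/
noncomputable def pDownAt (l : YoungDiagram) (y : ℤ) : ℝ :=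
  -(1 / (l.card : ℝ)) *
    ((∏ a ∈ addableCells l, ((y : ℝ) - (content a : ℝ))) /
      (∏ r ∈ (removableCells l).filter (fun r => content r ≠ y), ((y : ℝ) - (content r : ℝ))))

/-- `p↑(μ, l)` for `μ ⋖ l`. -/
noncomputable def pUp (μ l : YoungDiagram) : ℝ := pUpAt μ (addedContent μ l)

/-- `p↓(l, μ)` for `μ ⋖ l`. -/
noncomputable def pDown (l μ : YoungDiagram) : ℝ := pDownAt l (addedContent μ l)

/-- The Plancherel harmonic function
`f_Pl(l) = (1/|l|!) ∏_{(i,j) ∈ l} (l_i + l'_j - i - j + 1)` (hook products, written with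
0-based indices). -/
noncomputable def fPl (l : YoungDiagram) : ℝ :=
  (∏ c ∈ l.cells, ((l.rowLen c.1 : ℝ) + (l.colLen c.2 : ℝ) - (c.1 : ℝ) - (c.2 : ℝ) - 1)) /
    (Nat.factorial l.card : ℝ)

end YG

open YG Finset

namespace YGP

/-- The cell on diagonal `d` at index `m`. -/
def dg (d : ℤ) (m : ℕ) : ℕ × ℕ := ((-d).toNat + m, d.toNat + m)

lemma content_dg (d : ℤ) (m : ℕ) : content (dg d m) = d := by
  simp only [content, dg]; omega

lemma dg_min (p : ℕ × ℕ) : dg (content p) (min p.1 p.2) = p := by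
  simp only [content, dg, Prod.ext_iff]; omega

lemma min_dg (d : ℤ) (m : ℕ) : min (dg d m).1 (dg d m).2 = m := by
  simp only [dg]; omega

lemma mem_mono (l : YoungDiagram) {p q : ℕ × ℕ} (h1 : p.1 ≤ q.1) (h2 : p.2 ≤ q.2)
    (h : q ∈ l) : p ∈ l := by
  have := l.up_left_mem h1 h2 (show (q.1, q.2) ∈ l from by simpa using h)
  simpa using this

lemma card_bound (l : YoungDiagram) {i j : ℕ} (h : (i, j) ∈ l) : i < l.card ∧ j < l.card := by
  constructor
  · have hsub : (Finset.range (i+1)).image (fun k => (k, j)) ⊆ l.cells := by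
      intro p hp
      simp only [Finset.mem_image, Finset.mem_range] at hp
      obtain ⟨k, hk, rfl⟩ := hp
      exact (YoungDiagram.mem_cells _).2 (l.up_left_mem (by omega) le_rfl h)
    have := Finset.card_le_card hsub
    rwa [Finset.card_image_of_injective _ (fun a b hab => by simpa using hab),
      Finset.card_range] at this
  · have hsub : (Finset.range (j+1)).image (fun k => (i, k)) ⊆ l.cells := by
      intro p hp
      simp only [Finset.mem_image, Finset.mem_range] at hp
      obtain ⟨k, hk, rfl⟩ := hp
      exact (YoungDiagram.mem_cells _).2 (l.up_left_mem le_rfl (by omega) h)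
    have := Finset.card_le_card hsub
    rwa [Finset.card_image_of_injective _ (fun a b hab => by simpa using hab),
      Finset.card_range] at this

lemma exists_nm (l : YoungDiagram) (d : ℤ) : ∃ m, dg d m ∉ l := by
  refine ⟨l.card, fun hmem => ?_⟩
  have := card_bound l (show ((_ : ℕ), (_ : ℕ)) ∈ l from hmem)
  omega

/-- Number of cells of `l` on diagonal `d`. -/
def N (l : YoungDiagram) (d : ℤ) : ℕ := Nat.find (exists_nm l d)

lemma dg_mem_iff (l : YoungDiagram) (d : ℤ) (m : ℕ) : dg d m ∈ l ↔ m < N l d := by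
  constructor
  · intro hm
    by_contra hlt
    push_neg at hlt
    have hlt' : Nat.find (exists_nm l d) ≤ m := hlt
    exact Nat.find_spec (exists_nm l d)
      (l.up_left_mem (by simp only [dg]; exact Nat.add_le_add_left hlt' _) (by simp only [dg]; exact Nat.add_le_add_left hlt' _) hm)
  · intro hm
    have := Nat.find_min (exists_nm l d) hm
    simpa using this

lemma N_transpose (l : YoungDiagram) (d : ℤ) : N l.transpose d = N l (-d) := by
  have key : ∀ m, dg d m ∈ l.transpose ↔ dg (-d) m ∈ l := by
    intro m
    rw [YoungDiagram.mem_transpose]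
    have : (dg d m).swap = dg (-d) m := by
      simp only [dg, Prod.swap_prod_mk, Prod.ext_iff, neg_neg]
    rw [this]
  have h1 := (key (N l.transpose d))
  have h2 := (key (N l (-d)))
  rw [dg_mem_iff, dg_mem_iff] at h1 h2
  omega

lemma N_step (l : YoungDiagram) (d : ℤ) (hd : 0 ≤ d) :
    N l (d+1) ≤ N l d ∧ N l d ≤ N l (d+1) + 1 := by
  constructor
  · rcases Nat.eq_zero_or_pos (N l (d+1)) with h | h
    · omega
    · have hmem : dg (d+1) (N l (d+1) - 1) ∈ l := (dg_mem_iff _ _ _).2 (by omega)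
      have hmem2 : dg d (N l (d+1) - 1) ∈ l := by
        refine mem_mono l ?_ ?_ hmem <;> simp only [dg] <;> omega
      have := (dg_mem_iff _ _ _).1 hmem2
      omega
  · rcases Nat.lt_or_ge (N l d) 2 with h | h
    · omega
    · have hmem : dg d (N l d - 1) ∈ l := (dg_mem_iff _ _ _).2 (by omega)
      have hmem2 : dg (d+1) (N l d - 2) ∈ l := by
        refine mem_mono l ?_ ?_ hmem <;> simp only [dg] <;> omega
      have := (dg_mem_iff _ _ _).1 hmem2
      omega

lemma N_step' (l : YoungDiagram) (d : ℤ) (hd : d ≤ 0) :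
    N l (d-1) ≤ N l d ∧ N l d ≤ N l (d-1) + 1 := by
  have h := N_step l.transpose (-d) (by omega)
  rw [N_transpose, N_transpose, show -(-d+1) = d-1 by ring, neg_neg] at h
  exact h

/-- There is an addable cell of content `d`. -/
def AddAt (l : YoungDiagram) (d : ℤ) : Prop :=
  ((-d).toNat + N l d = 0 ∨ ((-d).toNat + N l d - 1, d.toNat + N l d) ∈ l) ∧
  (d.toNat + N l d = 0 ∨ ((-d).toNat + N l d, d.toNat + N l d - 1) ∈ l)

/-- There is a removable cell of content `d`. -/
def RemAt (l : YoungDiagram) (d : ℤ) : Prop :=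
  1 ≤ N l d ∧ ((-d).toNat + N l d - 1, d.toNat + N l d) ∉ l ∧
    ((-d).toNat + N l d, d.toNat + N l d - 1) ∉ l

instance (l : YoungDiagram) (d : ℤ) : Decidable (AddAt l d) := by
  unfold AddAt; infer_instance

instance (l : YoungDiagram) (d : ℤ) : Decidable (RemAt l d) := by
  unfold RemAt; infer_instance

lemma add_char (l : YoungDiagram) (p : ℕ × ℕ) :
    p ∈ addableCells l ↔ AddAt l (content p) ∧ p = dg (content p) (N l (content p)) := by
  constructor
  · intro hp
    simp only [addableCells, Finset.mem_filter, Finset.mem_product, Finset.mem_range] at hp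
    obtain ⟨⟨h1, h2⟩, hnm, hup, hleft⟩ := hp
    set d := content p with hd
    set m := min p.1 p.2 with hm
    have hpd : p = dg d m := (dg_min p).symm
    have hmge : N l d ≤ m := by
      by_contra hc; push_neg at hc
      exact hnm (by rw [hpd]; exact (dg_mem_iff l d m).2 hc)
    have hmle : m ≤ N l d := by
      rcases Nat.eq_zero_or_pos m with h0 | h0
      · omega
      · have hp1 : 1 ≤ p.1 := by omega
        have hp2 : 1 ≤ p.2 := by omega
        have hul : (p.1 - 1, p.2) ∈ l := by
          rcases hup with h | h
          · omega
          · exact h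
        have hull : (p.1 - 1, p.2 - 1) ∈ l :=
          mem_mono l (q := (p.1 - 1, p.2)) (le_refl _) (by simp) hul
        have heq : (p.1 - 1, p.2 - 1) = dg d (m - 1) := by
          simp only [dg, Prod.ext_iff, hd, content]; omega
        rw [heq] at hull
        have := (dg_mem_iff l d (m-1)).1 hull
        omega
    have hmN : m = N l d := le_antisymm hmle hmge
    rw [hmN] at hpd
    have e1 : p.1 = (-d).toNat + N l d := by rw [hpd]; rfl
    have e2 : p.2 = d.toNat + N l d := by rw [hpd]; rfl
    rw [e1, e2] at hup hleft
    exact ⟨⟨hup, hleft⟩, hpd⟩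
  · rintro ⟨ha, hpd⟩
    set d := content p with hd
    have e1 : p.1 = (-d).toNat + N l d := by rw [hpd]; rfl
    have e2 : p.2 = d.toNat + N l d := by rw [hpd]; rfl
    obtain ⟨ha1, ha2⟩ := ha
    simp only [addableCells, Finset.mem_filter, Finset.mem_product, Finset.mem_range]
    refine ⟨⟨?_, ?_⟩, ?_, ?_, ?_⟩
    · rcases ha1 with h | h
      · omega
      · have := (card_bound l h).1; omega
    · rcases ha2 with h | h
      · omega
      · have := (card_bound l h).2; omega
    · rw [hpd, dg_mem_iff]; omega
    · rw [e1, e2]; exact ha1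
    · rw [e1, e2]; exact ha2

lemma rem_char (l : YoungDiagram) (p : ℕ × ℕ) :
    p ∈ removableCells l ↔ RemAt l (content p) ∧ p = dg (content p) (N l (content p) - 1) := by
  constructor
  · intro hp
    simp only [removableCells, Finset.mem_filter, YoungDiagram.mem_cells] at hp
    obtain ⟨hmem, hr, hdn⟩ := hp
    set d := content p with hd
    set m := min p.1 p.2 with hm
    have hpd : p = dg d m := (dg_min p).symm
    have hmlt : m < N l d := (dg_mem_iff l d m).1 (hpd ▸ hmem)
    have hmN : m = N l d - 1 := by
      by_contra hc
      have h2 : m + 1 < N l d := by omega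
      have : dg d (m+1) ∈ l := (dg_mem_iff l d (m+1)).2 h2
      have : (p.1, p.2 + 1) ∈ l := by
        refine mem_mono l ?_ ?_ this <;> simp only [dg] <;>
          simp only [hpd, dg] <;> omega
      exact hr this
    rw [hmN] at hpd
    have e1 : p.1 = (-d).toNat + (N l d - 1) := by rw [hpd]; rfl
    have e2 : p.2 = d.toNat + (N l d - 1) := by rw [hpd]; rfl
    refine ⟨⟨by omega, ?_, ?_⟩, hpd⟩
    · have : ((-d).toNat + N l d - 1, d.toNat + N l d) = (p.1, p.2 + 1) := by
        simp only [Prod.ext_iff]; omega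
      rw [this]; exact hr
    · have : ((-d).toNat + N l d, d.toNat + N l d - 1) = (p.1 + 1, p.2) := by
        simp only [Prod.ext_iff]; omega
      rw [this]; exact hdn
  · rintro ⟨⟨hN, hr, hdn⟩, hpd⟩
    set d := content p with hd
    have e1 : p.1 = (-d).toNat + (N l d - 1) := by rw [hpd]; rfl
    have e2 : p.2 = d.toNat + (N l d - 1) := by rw [hpd]; rfl
    simp only [removableCells, Finset.mem_filter, YoungDiagram.mem_cells]
    refine ⟨?_, ?_, ?_⟩
    · rw [hpd]; exact (dg_mem_iff l d (N l d - 1)).2 (by omega)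
    · have : (p.1, p.2 + 1) = ((-d).toNat + N l d - 1, d.toNat + N l d) := by
        simp only [Prod.ext_iff]; omega
      rw [this]; exact hr
    · have : (p.1 + 1, p.2) = ((-d).toNat + N l d, d.toNat + N l d - 1) := by
        simp only [Prod.ext_iff]; omega
      rw [this]; exact hdn

lemma addAt_pos (l : YoungDiagram) (d : ℤ) (hd : 1 ≤ d) :
    AddAt l d ↔ (N l d = 0 ∨ N l d ≤ N l (d+1)) ∧ N l d < N l (d-1) := by
  have hL : ((-d).toNat + N l d, d.toNat + N l d - 1) ∈ l ↔ N l d < N l (d-1) := by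
    rw [show ((-d).toNat + N l d, d.toNat + N l d - 1) = dg (d-1) (N l d) from by
      simp only [dg, Prod.ext_iff]; omega, dg_mem_iff]
  have hU : 1 ≤ N l d →
      (((-d).toNat + N l d - 1, d.toNat + N l d) ∈ l ↔ N l d - 1 < N l (d+1)) := by
    intro hB
    rw [show ((-d).toNat + N l d - 1, d.toNat + N l d) = dg (d+1) (N l d - 1) from by
      simp only [dg, Prod.ext_iff]; omega, dg_mem_iff]
  constructor
  · rintro ⟨h1, h2⟩
    refine ⟨?_, ?_⟩
    · rcases h1 with h | h
      · left; omega
      · rcases Nat.eq_zero_or_pos (N l d) with h0 | h0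
        · exact Or.inl h0
        · right; have := (hU h0).1 h; omega
    · rcases h2 with h | h
      · omega
      · exact hL.1 h
  · rintro ⟨h1, h2⟩
    refine ⟨?_, Or.inr (hL.2 h2)⟩
    rcases h1 with h0 | hle
    · left; omega
    · rcases Nat.eq_zero_or_pos (N l d) with h0 | h0
      · left; omega
      · right; exact (hU h0).2 (by omega)

lemma remAt_pos (l : YoungDiagram) (d : ℤ) (hd : 1 ≤ d) :
    RemAt l d ↔ 1 ≤ N l d ∧ N l (d+1) < N l d ∧ N l (d-1) ≤ N l d := by
  unfold RemAt
  constructor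
  · rintro ⟨hB, hU, hL⟩
    refine ⟨hB, ?_, ?_⟩
    · by_contra hc
      exact hU (by
        rw [show ((-d).toNat + N l d - 1, d.toNat + N l d) = dg (d+1) (N l d - 1) from by
          simp only [dg, Prod.ext_iff]; omega, dg_mem_iff]; omega)
    · by_contra hc
      exact hL (by
        rw [show ((-d).toNat + N l d, d.toNat + N l d - 1) = dg (d-1) (N l d) from by
          simp only [dg, Prod.ext_iff]; omega, dg_mem_iff]; omega)
  · rintro ⟨hB, hC, hA⟩
    refine ⟨hB, ?_, ?_⟩
    · rw [show ((-d).toNat + N l d - 1, d.toNat + N l d) = dg (d+1) (N l d - 1) from by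
        simp only [dg, Prod.ext_iff]; omega, dg_mem_iff]; omega
    · rw [show ((-d).toNat + N l d, d.toNat + N l d - 1) = dg (d-1) (N l d) from by
        simp only [dg, Prod.ext_iff]; omega, dg_mem_iff]; omega

lemma addAt_zero (l : YoungDiagram) :
    AddAt l 0 ↔ N l 0 = 0 ∨ (N l 0 ≤ N l 1 ∧ N l 0 ≤ N l (-1)) := by
  unfold AddAt
  rcases Nat.eq_zero_or_pos (N l 0) with h0 | h0
  · simp [h0]
  · have hU : ((-(0:ℤ)).toNat + N l 0 - 1, (0:ℤ).toNat + N l 0) ∈ l ↔ N l 0 - 1 < N l 1 := by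
      rw [show ((-(0:ℤ)).toNat + N l 0 - 1, (0:ℤ).toNat + N l 0) = dg 1 (N l 0 - 1) from by
        simp only [dg, Prod.ext_iff]; omega, dg_mem_iff]
    have hL : ((-(0:ℤ)).toNat + N l 0, (0:ℤ).toNat + N l 0 - 1) ∈ l ↔ N l 0 - 1 < N l (-1) := by
      rw [show ((-(0:ℤ)).toNat + N l 0, (0:ℤ).toNat + N l 0 - 1) = dg (-1) (N l 0 - 1) from by
        simp only [dg, Prod.ext_iff]; omega, dg_mem_iff]
    rw [hU, hL]
    constructor
    · rintro ⟨h1 | h1, h2 | h2⟩ <;> first | omega | (right; constructor <;> omega)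
    · rintro (h | ⟨h1, h2⟩) <;> constructor <;> first | omega | (right; omega)

lemma remAt_zero (l : YoungDiagram) :
    RemAt l 0 ↔ 1 ≤ N l 0 ∧ N l 1 < N l 0 ∧ N l (-1) < N l 0 := by
  unfold RemAt
  constructor
  · rintro ⟨hB, hU, hL⟩
    refine ⟨hB, ?_, ?_⟩
    · by_contra hc
      exact hU (by
        rw [show ((-(0:ℤ)).toNat + N l 0 - 1, (0:ℤ).toNat + N l 0) = dg 1 (N l 0 - 1) from by
          simp only [dg, Prod.ext_iff]; omega, dg_mem_iff]; omega)
    · by_contra hc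
      exact hL (by
        rw [show ((-(0:ℤ)).toNat + N l 0, (0:ℤ).toNat + N l 0 - 1) = dg (-1) (N l 0 - 1) from by
          simp only [dg, Prod.ext_iff]; omega, dg_mem_iff]; omega)
  · rintro ⟨hB, hC, hA⟩
    refine ⟨hB, ?_, ?_⟩
    · rw [show ((-(0:ℤ)).toNat + N l 0 - 1, (0:ℤ).toNat + N l 0) = dg 1 (N l 0 - 1) from by
        simp only [dg, Prod.ext_iff]; omega, dg_mem_iff]; omega
    · rw [show ((-(0:ℤ)).toNat + N l 0, (0:ℤ).toNat + N l 0 - 1) = dg (-1) (N l 0 - 1) from by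
        simp only [dg, Prod.ext_iff]; omega, dg_mem_iff]; omega

lemma addAt_transpose (l : YoungDiagram) (d : ℤ) : AddAt l.transpose d ↔ AddAt l (-d) := by
  unfold AddAt
  simp only [N_transpose, YoungDiagram.mem_transpose, Prod.swap_prod_mk, neg_neg]
  exact and_comm

lemma remAt_transpose (l : YoungDiagram) (d : ℤ) : RemAt l.transpose d ↔ RemAt l (-d) := by
  unfold RemAt
  simp only [N_transpose, YoungDiagram.mem_transpose, Prod.swap_prod_mk, neg_neg]
  constructor
  · rintro ⟨h1, h2, h3⟩; exact ⟨h1, h3, h2⟩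
  · rintro ⟨h1, h2, h3⟩; exact ⟨h1, h3, h2⟩

lemma lap_pos (l : YoungDiagram) (d : ℤ) (hd : 1 ≤ d) :
    ((if AddAt l d then 1 else 0) : ℤ) - (if RemAt l d then 1 else 0)
      = (N l (d-1) : ℤ) + (N l (d+1) : ℤ) - 2 * (N l d : ℤ) := by
  have h1 := N_step l d (by omega)
  have h2 := N_step l (d-1) (by omega)
  rw [show d - 1 + 1 = d from by ring] at h2
  have hA := addAt_pos l d hd
  have hR := remAt_pos l d hd
  by_cases ha : AddAt l d <;> by_cases hr : RemAt l d <;>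
    simp only [ha, hr, if_true, if_false] <;>
    rw [hA] at ha <;> rw [hR] at hr <;> omega

lemma lap (l : YoungDiagram) (d : ℤ) :
    ((if AddAt l d then 1 else 0) : ℤ) - (if RemAt l d then 1 else 0)
      = (N l (d-1) : ℤ) + (N l (d+1) : ℤ) - 2 * (N l d : ℤ) + (if d = 0 then 1 else 0) := by
  rcases lt_trichotomy d 0 with hd | hd | hd
  · have h := lap_pos l.transpose (-d) (by omega)
    rw [N_transpose, N_transpose, N_transpose,
      show -(-d-1) = d+1 from by ring, show (-(-d+1) : ℤ) = d-1 from by ring, neg_neg] at h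
    simp only [addAt_transpose, remAt_transpose, neg_neg] at h
    rw [if_neg (by omega : ¬ d = 0)]
    omega
  · subst hd
    have h1 := N_step l 0 le_rfl
    have h2 := N_step' l 0 le_rfl
    rw [show (0:ℤ) + 1 = 1 from by ring] at h1
    rw [show (0:ℤ) - 1 = -1 from by ring] at h2
    have hA := addAt_zero l
    have hR := remAt_zero l
    rw [if_pos rfl, show (0:ℤ) + 1 = 1 from by ring, show (0:ℤ) - 1 = -1 from by ring]
    by_cases ha : AddAt l 0 <;> by_cases hr : RemAt l 0 <;>
      simp only [ha, hr, if_true, if_false] <;>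
      rw [hA] at ha <;> rw [hR] at hr <;> omega
  · have h := lap_pos l d (by omega)
    rw [if_neg (by omega : ¬ d = 0)]
    omega

lemma N_eq_of (l : YoungDiagram) (d : ℤ) (K : ℕ) (h : ∀ m, dg d m ∈ l ↔ m < K) :
    N l d = K := by
  have a := h (N l d)
  have b := h K
  rw [dg_mem_iff] at a b
  omega

lemma cover_data (l μ : YoungDiagram) (h : Covers l μ) :
    ∃ b : ℕ × ℕ, b ∈ μ ∧ b ∉ l ∧ addedContent l μ = content b ∧
      ∀ e : ℤ, (N μ e : ℤ) = N l e + (if e = content b then 1 else 0) := by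
  obtain ⟨hle, hcard⟩ := h
  have hsub : l.cells ⊆ μ.cells := fun p hp => (YoungDiagram.mem_cells p).2
    (hle ((YoungDiagram.mem_cells p).1 hp))
  have hcard1 : (μ.cells \ l.cells).card = 1 := by
    rw [Finset.card_sdiff_of_subset hsub]
    have h1 : μ.cells.card = l.cells.card + 1 := hcard
    have h2 := Finset.card_le_card hsub
    omega
  obtain ⟨b, hb⟩ := Finset.card_eq_one.1 hcard1
  have hbmem : b ∈ μ.cells \ l.cells := hb ▸ Finset.mem_singleton_self b
  have hbμ : b ∈ μ := (YoungDiagram.mem_cells b).1 (Finset.mem_sdiff.1 hbmem).1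
  have hbl : b ∉ l := fun hc => (Finset.mem_sdiff.1 hbmem).2 ((YoungDiagram.mem_cells b).2 hc)
  have hmem : ∀ p : ℕ × ℕ, p ∈ μ ↔ p ∈ l ∨ p = b := by
    intro p
    constructor
    · intro hp
      by_cases hpl : p ∈ l
      · exact Or.inl hpl
      · right
        have : p ∈ μ.cells \ l.cells := Finset.mem_sdiff.2
          ⟨(YoungDiagram.mem_cells p).2 hp, fun hc => hpl ((YoungDiagram.mem_cells p).1 hc)⟩
        rw [hb] at this
        exact Finset.mem_singleton.1 this
    · rintro (hp | rfl)
      · exact hle hp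
      · exact hbμ
  refine ⟨b, hbμ, hbl, ?_, ?_⟩
  · unfold addedContent
    rw [hb, Finset.sum_singleton]
  · set c := content b with hc
    set mb := min b.1 b.2 with hmb
    have hbdg : dg c mb = b := dg_min b
    have hdg_eq : ∀ (e : ℤ) (m : ℕ), dg e m = b ↔ e = c ∧ m = mb := by
      intro e m
      constructor
      · intro he
        have h1 : content (dg e m) = content b := by rw [he]
        rw [content_dg] at h1
        have h2 : min (dg e m).1 (dg e m).2 = mb := by rw [he]
        rw [min_dg] at h2
        exact ⟨h1, h2⟩
      · rintro ⟨rfl, rfl⟩; exact hbdg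
    have hmbN : mb = N l c := by
      have hge : N l c ≤ mb := by
        by_contra hcon
        push_neg at hcon
        exact hbl (hbdg ▸ (dg_mem_iff l c mb).2 hcon)
      have hle2 : mb ≤ N l c := by
        rcases Nat.eq_zero_or_pos mb with h0 | h0
        · omega
        · have hmem2 : dg c (mb - 1) ∈ μ := by
            refine mem_mono μ ?_ ?_ (hbdg ▸ hbμ) <;> simp only [dg] <;> omega
          have hne : dg c (mb - 1) ≠ b := by
            intro hcon
            have := (hdg_eq c (mb-1)).1 hcon
            omega
          have : dg c (mb - 1) ∈ l := by
            rcases (hmem _).1 hmem2 with h | h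
            · exact h
            · exact absurd h hne
          have := (dg_mem_iff l c (mb-1)).1 this
          omega
      omega
    intro e
    by_cases he : e = c
    · rw [if_pos he]
      have hNe : N μ e = N l e + 1 := by
        apply N_eq_of
        intro m
        rw [hmem, dg_mem_iff, hdg_eq, he]
        omega
      rw [hNe]; push_cast; ring
    · rw [if_neg he]
      have : N μ e = N l e := by
        apply N_eq_of
        intro m
        rw [hmem, dg_mem_iff, hdg_eq]
        constructor
        · rintro (h | ⟨rfl, _⟩)
          · exact h
          · exact absurd rfl he
        · exact Or.inl
      rw [this]; ring

lemma count_addable (l : YoungDiagram) (d : ℤ) :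
    Multiset.count d (Multiset.map content (addableCells l).val)
      = if AddAt l d then 1 else 0 := by
  rw [Multiset.count_map]
  have hfe : Multiset.filter (fun p => d = content p) (addableCells l).val
      = (Finset.filter (fun p => d = content p) (addableCells l)).val := by
    rw [Finset.filter_val]
  rw [hfe]
  have hset : Finset.filter (fun p => d = content p) (addableCells l)
      = if AddAt l d then {dg d (N l d)} else ∅ := by
    ext p
    rw [Finset.mem_filter, add_char]
    by_cases hA : AddAt l d
    · rw [if_pos hA, Finset.mem_singleton]
      constructor
      · rintro ⟨⟨_, hp⟩, hd2⟩
        rw [← hd2] at hp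
        exact hp
      · rintro rfl
        have hc := content_dg d (N l d)
        refine ⟨⟨?_, ?_⟩, hc.symm⟩
        · rw [hc]; exact hA
        · rw [hc]
    · rw [if_neg hA]
      simp only [Finset.notMem_empty, iff_false]
      rintro ⟨⟨ha, _⟩, hd2⟩
      rw [← hd2] at ha
      exact hA ha
  rw [hset]
  split_ifs <;> simp

lemma count_removable (l : YoungDiagram) (d : ℤ) :
    Multiset.count d (Multiset.map content (removableCells l).val)
      = if RemAt l d then 1 else 0 := by
  rw [Multiset.count_map]
  have hfe : Multiset.filter (fun p => d = content p) (removableCells l).val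
      = (Finset.filter (fun p => d = content p) (removableCells l)).val := by
    rw [Finset.filter_val]
  rw [hfe]
  have hset : Finset.filter (fun p => d = content p) (removableCells l)
      = if RemAt l d then {dg d (N l d - 1)} else ∅ := by
    ext p
    rw [Finset.mem_filter, rem_char]
    by_cases hR : RemAt l d
    · rw [if_pos hR, Finset.mem_singleton]
      constructor
      · rintro ⟨⟨_, hp⟩, hd2⟩
        rw [← hd2] at hp
        exact hp
      · rintro rfl
        have hc := content_dg d (N l d - 1)
        refine ⟨⟨?_, ?_⟩, hc.symm⟩
        · rw [hc]; exact hR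
        · rw [hc]
    · rw [if_neg hR]
      simp only [Finset.notMem_empty, iff_false]
      rintro ⟨⟨hr, _⟩, hd2⟩
      rw [← hd2] at hr
      exact hR hr
  rw [hset]
  split_ifs <;> simp

lemma key (l μ : YoungDiagram) (h : Covers l μ) :
    Multiset.map content (removableCells μ).val + Multiset.map content (addableCells l).val
      + {addedContent l μ - 1, addedContent l μ + 1}
    = Multiset.map content (removableCells l).val + Multiset.map content (addableCells μ).val
      + {addedContent l μ, addedContent l μ} := by
  obtain ⟨b, hbμ, hbl, hc, hN⟩ := cover_data l μ h
  ext d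
  simp only [Multiset.count_add, count_addable, count_removable, hc,
    Multiset.insert_eq_cons, Multiset.count_cons, Multiset.count_singleton]
  have lapl := lap l d
  have lapμ := lap μ d
  have hN1 := hN (d-1)
  have hN2 := hN d
  have hN3 := hN (d+1)
  simp only [show (d - 1 = content b) ↔ (d = content b + 1) from by omega] at hN1
  simp only [show (d + 1 = content b) ↔ (d = content b - 1) from by omega] at hN3
  set_option maxHeartbeats 2000000 in
  split_ifs at * <;> omega

end YGP

open YGP in
/-- Adding a box of content `c` to `λ` transforms the Cauchy transform
`G_λ(z) = ∏_j (z - y_j)/∏_j (z - x_j)` by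
`(z - c)²/((z - c - 1)(z - c + 1)) · G_λ(z) = G_μ(z)`, as rational functions. -/
theorem stmt6 (l μ : YoungDiagram) (h : Covers l μ) (z : ℝ)
    (hz1 : ∀ a ∈ addableCells l, z ≠ (content a : ℝ))
    (hz2 : ∀ a ∈ addableCells μ, z ≠ (content a : ℝ))
    (hz3 : z ≠ (addedContent l μ : ℝ) + 1) (hz4 : z ≠ (addedContent l μ : ℝ) - 1) :
    (z - (addedContent l μ : ℝ)) ^ 2 /
        ((z - (addedContent l μ : ℝ) - 1) * (z - (addedContent l μ : ℝ) + 1)) *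
        ((∏ r ∈ removableCells l, (z - (content r : ℝ))) /
          (∏ a ∈ addableCells l, (z - (content a : ℝ)))) =
      (∏ r ∈ removableCells μ, (z - (content r : ℝ))) /
        (∏ a ∈ addableCells μ, (z - (content a : ℝ))) := by
  have hkey := key l μ h
  have hprod := congrArg (fun M : Multiset ℤ => (M.map (fun d : ℤ => z - (d : ℝ))).prod) hkey
  simp only [Multiset.map_add, Multiset.prod_add, Multiset.insert_eq_cons, Multiset.map_cons,
    Multiset.map_singleton, Multiset.prod_cons, Multiset.prod_singleton, Multiset.map_map,
    Function.comp] at hprod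
  have e1 : ∀ (s : Finset (ℕ × ℕ)),
      (Multiset.map (fun p => z - ((content p : ℤ) : ℝ)) s.val).prod
        = ∏ r ∈ s, (z - (content r : ℝ)) := by
    intro s
    rw [Finset.prod_eq_multiset_prod]
  rw [e1, e1, e1, e1] at hprod
  push_cast at hprod
  set c := ((addedContent l μ : ℤ) : ℝ) with hcd
  have hDl : (∏ a ∈ addableCells l, (z - (content a : ℝ))) ≠ 0 :=
    Finset.prod_ne_zero_iff.2 (fun a ha => sub_ne_zero.2 (hz1 a ha))
  have hDμ : (∏ a ∈ addableCells μ, (z - (content a : ℝ))) ≠ 0 :=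
    Finset.prod_ne_zero_iff.2 (fun a ha => sub_ne_zero.2 (hz2 a ha))
  have hm1 : z - c - 1 ≠ 0 := by
    intro hcon; apply hz3; rw [hcd] at hcon ⊢; linarith
  have hp1 : z - c + 1 ≠ 0 := by
    intro hcon; apply hz4; rw [hcd] at hcon ⊢; linarith
  field_simp
  linear_combination (-1 : ℝ) * hprod
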